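/- Let q be a complex number with q ≠ 0 and q + q⁻¹ ≠ 0. Define the 4×4 matrices P₀ = E₁₁ + E₄₄, P₊ = (q+q⁻¹)⁻¹·(q·E₂₂ + E₂₃ + E₃₂ + q⁻¹·E₃₃), and P₋ = (q+q⁻¹)⁻¹·(q⁻¹·E₂₂ − E₂₃ − E₃₂ + q·E₃₃). Then (a) P₀, P₊, P₋ are mutually orthogonal projectors summing to the identity: P_a·P_b = 0 for a ≠ b, P_a² = P_a, and P₀ + P₊ + P₋ = I₄; and (b) for every z ∈ ℂ with 1 − q²z ≠ 0 and q²z − 1 ≠ 0, the matrix R̂(z) with rows (1,0,0,0), (0, z·c(z), b(z), 0), (0, b(z), c(z), 0), (0,0,0,1), where b(z) = (1−z)q/(1−q²z) and c(z) = (1−q²)/(1−q²z), admits the spectral resolution R̂(z) = P₀ + P₊ + ((q² − z)/(q²z − 1))·P₋. -/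

import Mathlib

/-- `P₀ = E₁₁ + E₄₄`. -/
noncomputable def P0u : Matrix (Fin 4) (Fin 4) ℂ :=
  !![1, 0, 0, 0; 0, 0, 0, 0; 0, 0, 0, 0; 0, 0, 0, 1]

/-- `P₊ = (q+q⁻¹)⁻¹ (q E₂₂ + E₂₃ + E₃₂ + q⁻¹ E₃₃)`. -/
noncomputable def Ppu (q : ℂ) : Matrix (Fin 4) (Fin 4) ℂ :=
  (q + q⁻¹)⁻¹ • !![0, 0, 0, 0; 0, q, 1, 0; 0, 1, q⁻¹, 0; 0, 0, 0, 0]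

/-- `P₋ = (q+q⁻¹)⁻¹ (q⁻¹ E₂₂ - E₂₃ - E₃₂ + q E₃₃)`. -/
noncomputable def Pmu (q : ℂ) : Matrix (Fin 4) (Fin 4) ℂ :=
  (q + q⁻¹)⁻¹ • !![0, 0, 0, 0; 0, q⁻¹, -1, 0; 0, -1, q, 0; 0, 0, 0, 0]

/-- The Baxterized braid matrix of `U_q(ŝl₂)`, with
`b(z) = (1-z)q/(1-q²z)` and `c(z) = (1-q²)/(1-q²z)`. -/
noncomputable def Ruq (q z : ℂ) : Matrix (Fin 4) (Fin 4) ℂ :=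
  !![1, 0, 0, 0;
     0, z * ((1 - q ^ 2) / (1 - q ^ 2 * z)), (1 - z) * q / (1 - q ^ 2 * z), 0;
     0, (1 - z) * q / (1 - q ^ 2 * z), (1 - q ^ 2) / (1 - q ^ 2 * z), 0;
     0, 0, 0, 1]

section aux
variable (q : ℂ)

private noncomputable def Au : Matrix (Fin 4) (Fin 4) ℂ :=
  !![0, 0, 0, 0; 0, q, 1, 0; 0, 1, q⁻¹, 0; 0, 0, 0, 0]

private noncomputable def Bu : Matrix (Fin 4) (Fin 4) ℂ :=
  !![0, 0, 0, 0; 0, q⁻¹, -1, 0; 0, -1, q, 0; 0, 0, 0, 0]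

private lemma AuAu (hq : q ≠ 0) : Au q * Au q = (q + q⁻¹) • Au q := by
  ext i j
  fin_cases i <;> fin_cases j <;>
    simp [Au, Matrix.mul_apply, Fin.sum_univ_four, Matrix.vecHead, Matrix.vecTail] <;>
    field_simp <;> ring

private lemma BuBu (hq : q ≠ 0) : Bu q * Bu q = (q + q⁻¹) • Bu q := by
  ext i j
  fin_cases i <;> fin_cases j <;>
    simp [Bu, Matrix.mul_apply, Fin.sum_univ_four, Matrix.vecHead, Matrix.vecTail] <;>
    field_simp <;> ring

private lemma AuBu (hq : q ≠ 0) : Au q * Bu q = 0 := by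
  ext i j
  fin_cases i <;> fin_cases j <;>
    simp [Au, Bu, Matrix.mul_apply, Fin.sum_univ_four, Matrix.vecHead, Matrix.vecTail] <;>
    field_simp <;> ring

private lemma BuAu (hq : q ≠ 0) : Bu q * Au q = 0 := by
  ext i j
  fin_cases i <;> fin_cases j <;>
    simp [Au, Bu, Matrix.mul_apply, Fin.sum_univ_four, Matrix.vecHead, Matrix.vecTail] <;>
    field_simp <;> ring

private lemma P0Au : P0u * Au q = 0 := by
  ext i j
  fin_cases i <;> fin_cases j <;>
    simp [Au, P0u, Matrix.mul_apply, Fin.sum_univ_four, Matrix.vecHead, Matrix.vecTail]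

private lemma AuP0 : Au q * P0u = 0 := by
  ext i j
  fin_cases i <;> fin_cases j <;>
    simp [Au, P0u, Matrix.mul_apply, Fin.sum_univ_four, Matrix.vecHead, Matrix.vecTail]

private lemma P0Bu : P0u * Bu q = 0 := by
  ext i j
  fin_cases i <;> fin_cases j <;>
    simp [Bu, P0u, Matrix.mul_apply, Fin.sum_univ_four, Matrix.vecHead, Matrix.vecTail]

private lemma BuP0 : Bu q * P0u = 0 := by
  ext i j
  fin_cases i <;> fin_cases j <;>
    simp [Bu, P0u, Matrix.mul_apply, Fin.sum_univ_four, Matrix.vecHead, Matrix.vecTail]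

end aux

set_option maxHeartbeats 1000000 in
/-- `P₀, P₊, P₋` are mutually orthogonal projectors summing to the
identity, and `R̂(z) = P₀ + P₊ + ((q²-z)/(q²z-1)) P₋`. -/
theorem uq_sl2_spectral_resolution (q : ℂ) (hq : q ≠ 0) (hqq : q + q⁻¹ ≠ 0) :
    (P0u * P0u = P0u ∧ Ppu q * Ppu q = Ppu q ∧ Pmu q * Pmu q = Pmu q ∧
     P0u * Ppu q = 0 ∧ Ppu q * P0u = 0 ∧
     P0u * Pmu q = 0 ∧ Pmu q * P0u = 0 ∧
     Ppu q * Pmu q = 0 ∧ Pmu q * Ppu q = 0 ∧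
     P0u + Ppu q + Pmu q = 1) ∧
    (∀ z : ℂ, 1 - q ^ 2 * z ≠ 0 → q ^ 2 * z - 1 ≠ 0 →
      Ruq q z = P0u + Ppu q + ((q ^ 2 - z) / (q ^ 2 * z - 1)) • Pmu q) := by
  have hPp : Ppu q = (q + q⁻¹)⁻¹ • Au q := rfl
  have hPm : Pmu q = (q + q⁻¹)⁻¹ • Bu q := rfl
  have hq2 : 1 + q ^ 2 ≠ 0 := by
    intro h
    apply hqq
    field_simp
    linear_combination h
  have hc : q + q⁻¹ = (1 + q ^ 2) / q := by
    field_simp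
    ring
  refine ⟨⟨?_, ?_, ?_, ?_, ?_, ?_, ?_, ?_, ?_, ?_⟩, ?_⟩
  · ext i j
    fin_cases i <;> fin_cases j <;>
      simp [P0u, Matrix.mul_apply, Fin.sum_univ_four, Matrix.vecHead, Matrix.vecTail]
  · rw [hPp, Matrix.smul_mul, Matrix.mul_smul, AuAu q hq, smul_smul, smul_smul,
      mul_assoc, inv_mul_cancel₀ hqq, mul_one]
  · rw [hPm, Matrix.smul_mul, Matrix.mul_smul, BuBu q hq, smul_smul, smul_smul,
      mul_assoc, inv_mul_cancel₀ hqq, mul_one]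
  · rw [hPp, Matrix.mul_smul, P0Au, smul_zero]
  · rw [hPp, Matrix.smul_mul, AuP0, smul_zero]
  · rw [hPm, Matrix.mul_smul, P0Bu, smul_zero]
  · rw [hPm, Matrix.smul_mul, BuP0, smul_zero]
  · rw [hPp, hPm, Matrix.smul_mul, Matrix.mul_smul, AuBu q hq, smul_zero, smul_zero]
  · rw [hPp, hPm, Matrix.smul_mul, Matrix.mul_smul, BuAu q hq, smul_zero, smul_zero]
  · ext i j
    fin_cases i <;> fin_cases j <;>
      simp [P0u, Ppu, Pmu, hc, Matrix.one_apply, Matrix.vecHead, Matrix.vecTail] <;>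
      field_simp [hq2] <;> ring
  · intro z h1 h2
    ext i j
    fin_cases i <;> fin_cases j <;>
      simp [P0u, Ppu, Pmu, Ruq, hc, Matrix.vecHead, Matrix.vecTail] <;>
      field_simp [hq2, h1, h2, show 1 - z * q ^ 2 ≠ 0 by rwa [mul_comm],
        show z * q ^ 2 - 1 ≠ 0 by rwa [mul_comm]] <;> ring
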